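/- The function σ ↦ (σ - 1)·ζ(σ) is strictly increasing on the real interval (1, 2]. -/

import Mathlib

open Complex

namespace SMOaux
open Real Filter


lemma mvt_pow {σ a : ℝ} (hσ : 1 < σ) (ha : 1 ≤ a) :
    a ^ (1-σ) - (a+1) ^ (1-σ) ≤ (σ-1) * a ^ (-σ) := by
  have ha0 : 0 < a := lt_of_lt_of_le one_pos ha
  obtain ⟨c, hc, hceq⟩ := exists_hasDerivAt_eq_slope (fun x => -(x ^ (1-σ)))
      (fun x => (σ-1) * x ^ (-σ)) (by linarith : a < a+1)
      (by
        intro x hx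
        have hx0 : x ≠ 0 := by have h1 := hx.1; intro h; rw [h] at h1; linarith
        exact ((continuousAt_rpow_const x _ (Or.inl hx0)).continuousWithinAt).neg)
      (by
        intro x hx
        have hx0 : x ≠ 0 := by have h1 := hx.1; intro h; rw [h] at h1; linarith
        have h := (Real.hasDerivAt_rpow_const (p := 1-σ) (Or.inl hx0)).neg
        refine h.congr_deriv ?_
        rw [show 1-σ-1 = -σ by ring]; ring)
  have hca : a ≤ c := hc.1.le
  have hslope : a ^ (1-σ) - (a+1) ^ (1-σ) = (σ-1) * c ^ (-σ) := by
    rw [hceq]; ring_nf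
  have hmono : c ^ (-σ) ≤ a ^ (-σ) :=
    rpow_le_rpow_of_nonpos ha0 hca (by linarith : -σ ≤ 0)
  rw [hslope]
  have h1 : (0:ℝ) ≤ σ - 1 := by linarith
  exact mul_le_mul_of_nonneg_left hmono h1


lemma g_anti {σ x y : ℝ} (hσ : 1 < σ) (hx : Real.exp 1 ≤ x) (hxy : x ≤ y) :
    Real.log y * y ^ (-σ) ≤ Real.log x * x ^ (-σ) := by
  have hx0 : 0 < x := lt_of_lt_of_le (exp_pos 1) hx
  have hy0 : 0 < y := lt_of_lt_of_le hx0 hxy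
  have hlx : 0 ≤ Real.log x := log_nonneg (le_trans (by
    have := add_one_le_exp (1:ℝ); linarith) hx)
  have key : Real.log y / y ≤ Real.log x / x :=
    Real.log_div_self_antitoneOn (by exact hx) (le_trans hx hxy) hxy
  have h1 : Real.log y * y ^ (-σ) = (Real.log y / y) * y ^ (1-σ) := by
    rw [div_mul_eq_mul_div, mul_comm, mul_div_assoc, ← Real.rpow_sub_one hy0.ne']
    ring_nf
  have h2 : Real.log x * x ^ (-σ) = (Real.log x / x) * x ^ (1-σ) := by
    rw [div_mul_eq_mul_div, mul_comm, mul_div_assoc, ← Real.rpow_sub_one hx0.ne']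
    ring_nf
  rw [h1, h2]
  have hpow : y ^ (1-σ) ≤ x ^ (1-σ) :=
    rpow_le_rpow_of_nonpos hx0 hxy (by linarith)
  have hly : 0 ≤ Real.log y / y := div_nonneg (le_trans hlx (log_le_log hx0 hxy)) hy0.le
  calc Real.log y / y * y ^ (1-σ) ≤ Real.log x / x * y ^ (1-σ) :=
        mul_le_mul_of_nonneg_right key (rpow_nonneg hy0.le _)
    _ ≤ Real.log x / x * x ^ (1-σ) :=
        mul_le_mul_of_nonneg_left hpow (div_nonneg hlx hx0.le)

noncomputable def G (σ x : ℝ) : ℝ := -(x ^ (1-σ) * (Real.log x/(σ-1) + 1/(σ-1)^2))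

lemma hasDerivAt_G {σ x : ℝ} (hσ : 1 < σ) (hx : 0 < x) :
    HasDerivAt (G σ) (Real.log x * x ^ (-σ)) x := by
  have hx0 : x ≠ 0 := hx.ne'
  have h1 : HasDerivAt (fun x : ℝ => x ^ (1-σ)) ((1-σ) * x ^ (-σ)) x := by
    have h := Real.hasDerivAt_rpow_const (p := 1-σ) (Or.inl hx0)
    convert h using 2
    rw [show 1-σ-1 = -σ by ring]
  have h2 : HasDerivAt Real.log x⁻¹ x := Real.hasDerivAt_log hx0
  have h3 : HasDerivAt (fun x : ℝ => Real.log x/(σ-1) + 1/(σ-1)^2)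
      (x⁻¹/(σ-1)) x := (h2.div_const _).add_const _
  have h4 := (h1.mul h3).neg
  refine h4.congr_deriv ?_
  have hpow : x ^ (1-σ) = x ^ (-σ) * x := by
    rw [← Real.rpow_add_one hx0, neg_add_eq_sub]
  have hσ1 : σ - 1 ≠ 0 := by intro h; apply absurd hσ; rw [show σ = 1 by linarith]; simp
  rw [hpow]
  field_simp
  ring

lemma mvt_G {σ a : ℝ} (hσ : 1 < σ) (ha : 3 ≤ a) :
    Real.log (a+1) * (a+1) ^ (-σ) ≤ G σ (a+1) - G σ a := by
  have ha0 : (0:ℝ) < a := by linarith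
  obtain ⟨c, hc, hceq⟩ := exists_hasDerivAt_eq_slope (G σ)
      (fun x => Real.log x * x ^ (-σ)) (by linarith : a < a+1)
      (by
        intro x hx
        have hx0 : 0 < x := lt_of_lt_of_le ha0 hx.1
        exact (hasDerivAt_G hσ hx0).continuousAt.continuousWithinAt)
      (fun x hx => hasDerivAt_G hσ (lt_trans ha0 hx.1))
  have he : Real.exp 1 ≤ c := by
    have h9 : Real.exp 1 < 2.7182818286 := exp_one_lt_d9
    have := hc.1
    linarith
  have hg := g_anti hσ he (le_of_lt hc.2)
  rw [hceq] at hg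
  calc Real.log (a+1) * (a+1) ^ (-σ) ≤ (G σ (a+1) - G σ a)/(a+1-a) := hg
    _ = G σ (a+1) - G σ a := by norm_num



lemma summable_zterm {σ : ℝ} (hσ : 1 < σ) (k : ℕ) :
    Summable (fun n : ℕ => ((n:ℝ)+k) ^ (-σ) ) := by
  have h0 : Summable (fun n : ℕ => 1/(n:ℝ)^σ) := summable_one_div_nat_rpow.mpr hσ
  have h1 : Summable (fun n : ℕ => 1/((n+k : ℕ):ℝ)^σ) := (summable_nat_add_iff k).mpr h0
  refine h1.congr fun n => ?_
  push_cast
  rw [Real.rpow_neg (by positivity), one_div]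

lemma Ztail_lower {σ : ℝ} (hσ : 1 < σ) :
    (3:ℝ) ^ (1-σ)/(σ-1) ≤ ∑' n : ℕ, ((n:ℝ)+3) ^ (-σ) := by
  have hσ0 : (0:ℝ) < σ - 1 := by linarith
  set h : ℕ → ℝ := fun n => ((n:ℝ)+3) ^ (1-σ)/(σ-1) with hh
  have hnonneg : ∀ n : ℕ, 0 ≤ h n - h (n+1) := by
    intro n
    have : ((n:ℝ)+1+3) ^ (1-σ) ≤ ((n:ℝ)+3) ^ (1-σ) :=
      rpow_le_rpow_of_nonpos (by positivity) (by linarith) (by linarith)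
    simp only [hh]
    rw [sub_nonneg]
    push_cast
    apply div_le_div_of_nonneg_right _ hσ0.le
    linarith
  have htend : Tendsto (fun n : ℕ => h n) atTop (nhds 0) := by
    have h2 : Tendsto (fun x : ℝ => x ^ (-(σ-1))) atTop (nhds 0) := tendsto_rpow_neg_atTop hσ0
    have h3 : Tendsto (fun n : ℕ => (n:ℝ)+3) atTop atTop :=
      tendsto_atTop_add_const_right _ _ tendsto_natCast_atTop_atTop
    have h4 := (h2.comp h3).div_const (σ-1)
    simpa [hh, show -(σ-1) = 1-σ by ring] using h4
  have htel : HasSum (fun n => h n - h (n+1)) (h 0) := by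
    rw [hasSum_iff_tendsto_nat_of_nonneg hnonneg]
    have : ∀ n : ℕ, ∑ i ∈ Finset.range n, (h i - h (i+1)) = h 0 - h n :=
      fun n => Finset.sum_range_sub' h n
    simp_rw [this]
    simpa using tendsto_const_nhds.sub htend
  have hle : ∀ n : ℕ, h n - h (n+1) ≤ ((n:ℝ)+3) ^ (-σ) := by
    intro n
    have hm := mvt_pow hσ (show (1:ℝ) ≤ (n:ℝ)+3 by linarith [Nat.cast_nonneg (α := ℝ) n])
    simp only [hh]
    rw [div_sub_div_same, div_le_iff₀ hσ0]
    push_cast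
    calc ((n:ℝ)+3)^(1-σ) - ((n:ℝ)+1+3)^(1-σ) = ((n:ℝ)+3)^(1-σ) - (((n:ℝ)+3)+1)^(1-σ) := by ring_nf
      _ ≤ (σ-1) * ((n:ℝ)+3)^(-σ) := hm
      _ = ((n:ℝ)+3)^(-σ) * (σ-1) := by ring
  have h0eq : h 0 = (3:ℝ) ^ (1-σ)/(σ-1) := by simp [hh]
  calc (3:ℝ) ^ (1-σ)/(σ-1) = h 0 := h0eq.symm
    _ = ∑' n, (h n - h (n+1)) := htel.tsum_eq.symm
    _ ≤ ∑' n : ℕ, ((n:ℝ)+3) ^ (-σ) := Summable.tsum_le_tsum hle htel.summable (summable_zterm hσ 3)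




lemma sterm_nonneg {σ : ℝ} (n : ℕ) : 0 ≤ Real.log ((n:ℝ)+4) * ((n:ℝ)+4) ^ (-σ) :=
  mul_nonneg (log_nonneg (by linarith [Nat.cast_nonneg (α := ℝ) n])) (rpow_nonneg (by positivity) _)

lemma G_tendsto {σ : ℝ} (hσ : 1 < σ) : Tendsto (fun n : ℕ => G σ ((n:ℝ)+3)) atTop (nhds 0) := by
  have hσ0 : (0:ℝ) < σ - 1 := by linarith
  have hσ1 : σ - 1 ≠ 0 := hσ0.ne'
  have h3 : Tendsto (fun n : ℕ => (n:ℝ)+3) atTop atTop :=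
    tendsto_atTop_add_const_right _ _ tendsto_natCast_atTop_atTop
  have hlog : Tendsto (fun x : ℝ => Real.log x / x ^ (σ-1)) atTop (nhds 0) :=
    (isLittleO_log_rpow_atTop hσ0).tendsto_div_nhds_zero
  have hpow : Tendsto (fun x : ℝ => x ^ (-(σ-1))) atTop (nhds 0) := tendsto_rpow_neg_atTop hσ0
  have hGx : Tendsto (fun x : ℝ => G σ x) atTop (nhds 0) := by
    have hcomb := ((hlog.div_const (σ-1)).add (hpow.mul_const (1/(σ-1)^2))).neg
    rw [show -((0:ℝ)/(σ-1) + 0 * (1/(σ-1)^2)) = 0 by ring] at hcomb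
    apply hcomb.congr'
    filter_upwards [eventually_gt_atTop (0:ℝ)] with x hx
    have hxs : (x:ℝ) ^ (σ-1) ≠ 0 := by positivity
    unfold G
    rw [show (1:ℝ)-σ = -(σ-1) by ring, Real.rpow_neg hx.le]
    field_simp
  exact hGx.comp h3

lemma Stail_upper {σ : ℝ} (hσ : 1 < σ) :
    Summable (fun n : ℕ => Real.log ((n:ℝ)+4) * ((n:ℝ)+4) ^ (-σ)) ∧
    ∑' n : ℕ, Real.log ((n:ℝ)+4) * ((n:ℝ)+4) ^ (-σ) ≤
      (3:ℝ) ^ (1-σ) * (Real.log 3/(σ-1) + 1/(σ-1)^2) := by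
  set T : ℕ → ℝ := fun n => G σ ((n:ℝ)+4) - G σ ((n:ℝ)+3) with hT
  have hle : ∀ n : ℕ, Real.log ((n:ℝ)+4) * ((n:ℝ)+4) ^ (-σ) ≤ T n := by
    intro n
    have := mvt_G hσ (show (3:ℝ) ≤ (n:ℝ)+3 by linarith [Nat.cast_nonneg (α := ℝ) n])
    simpa [hT, show ((n:ℝ)+3+1) = (n:ℝ)+4 by ring] using this
  have hTnonneg : ∀ n : ℕ, 0 ≤ T n := fun n => le_trans (sterm_nonneg n) (hle n)
  have htel : HasSum T (-(G σ 3)) := by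
    rw [hasSum_iff_tendsto_nat_of_nonneg hTnonneg]
    have hps : ∀ n : ℕ, ∑ i ∈ Finset.range n, T i = G σ ((n:ℝ)+3) - G σ 3 := by
      intro n
      have := Finset.sum_range_sub (fun i : ℕ => G σ ((i:ℝ)+3)) n
      simp only [hT]
      push_cast at this
      rw [show G σ ((n:ℝ) + 3) - G σ 3 = G σ ((n:ℝ)+3) - G σ (0+3) by norm_num, ← this]
      apply Finset.sum_congr rfl
      intro i _
      rw [show ((i:ℝ)+1+3) = (i:ℝ)+4 by ring]
    simp_rw [hps]
    simpa using (G_tendsto hσ).sub tendsto_const_nhds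
  have hsum : Summable (fun n : ℕ => Real.log ((n:ℝ)+4) * ((n:ℝ)+4) ^ (-σ)) :=
    Summable.of_nonneg_of_le sterm_nonneg hle htel.summable
  refine ⟨hsum, ?_⟩
  have := Summable.tsum_le_tsum hle hsum htel.summable
  rw [htel.tsum_eq] at this
  refine le_trans this (le_of_eq ?_)
  unfold G
  ring


lemma zeta_re {σ : ℝ} (hσ : 1 < σ) :
    (riemannZeta σ).re = ∑' n : ℕ, ((n:ℝ)+1) ^ (-σ) := by
  have hz : riemannZeta σ = ∑' n : ℕ, 1/((n:ℂ)+1) ^ (σ:ℂ) :=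
    zeta_eq_tsum_one_div_nat_add_one_cpow (by simpa using hσ)
  have hsum : Summable (fun n : ℕ => ((n:ℝ)+1) ^ (-σ)) := by
    simpa using summable_zterm hσ 1
  have hterm : ∀ n : ℕ, (1/((n:ℂ)+1) ^ (σ:ℂ) : ℂ) = ((((n:ℝ)+1) ^ (-σ) : ℝ) : ℂ) := by
    intro n
    have h1 : ((n:ℂ)+1) = ((((n:ℝ)+1) : ℝ) : ℂ) := by push_cast; ring
    rw [h1, ← Complex.ofReal_cpow (by positivity) σ]
    rw [Real.rpow_neg (by positivity), ← Complex.ofReal_one, ← Complex.ofReal_div]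
    norm_num
  have : riemannZeta σ = ((∑' n : ℕ, ((n:ℝ)+1) ^ (-σ) : ℝ) : ℂ) := by
    rw [hz]
    rw [show (fun n : ℕ => 1/((n:ℂ)+1) ^ (σ:ℂ)) = fun n : ℕ => ((((n:ℝ)+1) ^ (-σ) : ℝ) : ℂ) from funext hterm]
    exact ((hsum.hasSum.mapL Complex.ofRealCLM).tsum_eq)
  rw [this, Complex.ofReal_re]


noncomputable def sre (σ : ℝ) (n : ℕ) : ℝ := if n = 0 then 0 else Real.log n * (n:ℝ) ^ (-σ)

lemma hasDerivAt_zeta_re {σ : ℝ} (hσ : 1 < σ) (hsum : Summable (sre σ)) :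
    HasDerivAt (fun x : ℝ => (riemannZeta x).re) (-∑' n, sre σ n) σ := by
  have habs : LSeries.abscissaOfAbsConv 1 < ((σ:ℂ)).re := by
    rw [LSeries.abscissaOfAbsConv_one]
    simpa using (by exact_mod_cast hσ : (1:EReal) < (σ:EReal))
  have hL := LSeries_hasDerivAt habs
  have hopen : IsOpen {s : ℂ | 1 < s.re} := isOpen_lt continuous_const Complex.continuous_re
  have heq : riemannZeta =ᶠ[nhds (σ:ℂ)] LSeries 1 := by
    filter_upwards [hopen.mem_nhds (by simpa using hσ)] with s hs
    exact (LSeries_one_eq_riemannZeta hs).symm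
  have hz : HasDerivAt riemannZeta (-LSeries (LSeries.logMul 1) σ) σ :=
    hL.congr_of_eventuallyEq heq
  have hre := hz.real_of_complex
  convert hre using 1
  -- identify the derivative value
  have hterm : ∀ n : ℕ, LSeries.term (LSeries.logMul 1) σ n = ((sre σ n : ℝ) : ℂ) := by
    intro n
    rcases eq_or_ne n 0 with rfl | hn
    · simp [LSeries.term, sre]
    · have hn0 : (0:ℝ) < n := by positivity
      rw [LSeries.term_of_ne_zero hn, sre]
      simp only [hn, if_false]
      rw [LSeries.logMul, Pi.one_apply, mul_one]
      have h1 : ((n:ℂ)) = (((n:ℝ)) : ℂ) := by push_cast; ring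
      rw [h1, ← Complex.ofReal_cpow hn0.le σ, ← Complex.ofReal_log hn0.le]
      rw [Real.rpow_neg hn0.le, ← Complex.ofReal_div]
      push_cast
      rw [div_eq_mul_inv]
  have hLs : LSeries (LSeries.logMul 1) σ = ((∑' n, sre σ n : ℝ) : ℂ) := by
    rw [LSeries]
    rw [show (fun n => LSeries.term (LSeries.logMul 1) σ n) = fun n => ((sre σ n : ℝ) : ℂ) from funext hterm]
    exact (hsum.hasSum.mapL Complex.ofRealCLM).tsum_eq
  rw [hLs]
  simp


lemma log3_lt : Real.log 3 < 5/4 := by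
  rw [Real.log_lt_iff_lt_exp (by norm_num)]
  have h1 := Real.exp_one_gt_d9
  have h2 : (1:ℝ)/4 + 1 ≤ Real.exp (1/4) := Real.add_one_le_exp (1/4)
  have h3 : Real.exp (5/4) = Real.exp 1 * Real.exp (1/4) := by
    rw [← Real.exp_add]; norm_num
  nlinarith [Real.exp_pos (1/4:ℝ)]

lemma l98 : 3 * Real.log 2 ≤ 2 * Real.log 3 := by
  have h := Real.log_le_log (by norm_num : (0:ℝ) < 2^3) (by norm_num : (2:ℝ)^3 ≤ 3^2)
  rw [Real.log_pow, Real.log_pow] at h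
  push_cast at h
  linarith

lemma amgm3 {t : ℝ} (h0 : 0 ≤ t) (h1 : t ≤ 1) : (3:ℝ) ^ (-t) ≤ 1 - (2/3)*t := by
  have := Real.geom_mean_le_arith_mean2_weighted (w₁ := 1-t) (w₂ := t) (p₁ := 1) (p₂ := 1/3)
    (by linarith) h0 (by norm_num) (by norm_num) (by ring)
  rw [Real.one_rpow, one_mul] at this
  have heq : ((1:ℝ)/3) ^ t = (3:ℝ) ^ (-t) := by
    rw [Real.rpow_neg (by norm_num), ← Real.inv_rpow (by norm_num), one_div]
  rw [heq] at this
  linarith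

lemma key_numeric {σ : ℝ} (h1 : 1 < σ) (h2 : σ < 2) :
    (3:ℝ) ^ (1-σ) * Real.log 3 + (σ-1) * (Real.log 2 * (2:ℝ) ^ (-σ) + Real.log 3 * (3:ℝ) ^ (-σ))
      < 1 + (2:ℝ) ^ (-σ) := by
  set t := σ - 1 with ht
  have t0 : 0 < t := by simp [ht]; linarith
  have t1 : t < 1 := by simp [ht]; linarith
  have l2n : 0 ≤ Real.log 2 := Real.log_nonneg (by norm_num)
  have l3n : 0 ≤ Real.log 3 := Real.log_nonneg (by norm_num)
  have hquarter : (1:ℝ)/4 ≤ (2:ℝ) ^ (-σ) := by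
    have h := Real.rpow_le_rpow_of_exponent_le (by norm_num : (1:ℝ) ≤ 2)
      (by linarith : (-2:ℝ) ≤ -σ)
    have h4 : (2:ℝ) ^ (-2:ℝ) = 1/4 := by
      rw [Real.rpow_neg (by norm_num), show ((2:ℝ)^(2:ℝ)) = 4 by
        rw [show (2:ℝ) = ((2:ℕ):ℝ) by norm_num, Real.rpow_natCast]; norm_num]
      norm_num
    linarith [h, h4.symm ▸ h]
  have hhalf : (2:ℝ) ^ (-σ) ≤ 1/2 := by
    have h := Real.rpow_le_rpow_of_exponent_le (by norm_num : (1:ℝ) ≤ 2)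
      (by linarith : -σ ≤ (-1:ℝ))
    rwa [Real.rpow_neg_one, show ((2:ℝ)⁻¹) = 1/2 by norm_num] at h
  have hthird : (3:ℝ) ^ (-σ) ≤ 1/3 := by
    have h := Real.rpow_le_rpow_of_exponent_le (by norm_num : (1:ℝ) ≤ 3)
      (by linarith : -σ ≤ (-1:ℝ))
    rwa [Real.rpow_neg_one, show ((3:ℝ)⁻¹) = 1/3 by norm_num] at h
  have h3n : (0:ℝ) ≤ (3:ℝ) ^ (-σ) := Real.rpow_nonneg (by norm_num) _
  have hA : (3:ℝ) ^ (1-σ) ≤ 1 - (2/3)*t := by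
    rw [show (1-σ) = -t by rw [ht]; ring]
    exact amgm3 t0.le t1.le
  have e1 : (3:ℝ) ^ (1-σ) * Real.log 3 ≤ (1 - (2/3)*t) * Real.log 3 :=
    mul_le_mul_of_nonneg_right hA l3n
  have e4 : Real.log 2 * (2:ℝ)^(-σ) + Real.log 3 * (3:ℝ)^(-σ) ≤ Real.log 2 * (1/2) + Real.log 3 * (1/3) := by
    have := mul_le_mul_of_nonneg_left hhalf l2n
    have := mul_le_mul_of_nonneg_left hthird l3n
    linarith
  have e5 : t * (Real.log 2 * (2:ℝ)^(-σ) + Real.log 3 * (3:ℝ)^(-σ)) ≤ t * (Real.log 2 * (1/2) + Real.log 3 * (1/3)) :=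
    mul_le_mul_of_nonneg_left e4 t0.le
  have e6 : 0 ≤ t * (Real.log 3/3 - Real.log 2/2) :=
    mul_nonneg t0.le (by linarith [l98])
  have l3lt := log3_lt
  nlinarith [e1, e5, e6, hquarter]


lemma Z_lower {σ : ℝ} (hσ : 1 < σ) :
    1 + (2:ℝ) ^ (-σ) + (3:ℝ) ^ (1-σ)/(σ-1) ≤ (riemannZeta σ).re := by
  rw [zeta_re hσ]
  have hsum : Summable (fun n : ℕ => ((n:ℝ)+1) ^ (-σ)) := by
    simpa using summable_zterm hσ 1
  have hpeel := Summable.sum_add_tsum_nat_add (f := fun n : ℕ => ((n:ℝ)+1) ^ (-σ)) 2 hsum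
  have hfin : ∑ i ∈ Finset.range 2, (((i:ℕ):ℝ)+1) ^ (-σ) = 1 + (2:ℝ) ^ (-σ) := by
    rw [Finset.sum_range_succ, Finset.sum_range_one]
    norm_num [Real.one_rpow]
  have htail : ∀ n : ℕ, ((((n+2:ℕ)):ℝ)+1) ^ (-σ) = ((n:ℝ)+3) ^ (-σ) := by
    intro n; push_cast; ring_nf
  rw [← hpeel, hfin]
  have := Ztail_lower hσ
  have heq : ∑' n : ℕ, ((((n+2:ℕ)):ℝ)+1) ^ (-σ) = ∑' n : ℕ, ((n:ℝ)+3) ^ (-σ) := by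
    exact tsum_congr htail
  push_cast
  push_cast at heq
  rw [heq]
  linarith


lemma summable_sre {σ : ℝ} (hσ : 1 < σ) : Summable (sre σ) := by
  have h := (Stail_upper hσ).1
  have heq : (fun n : ℕ => sre σ (n+4)) = fun n : ℕ => Real.log ((n:ℝ)+4) * ((n:ℝ)+4) ^ (-σ) := by
    funext n
    simp only [sre, Nat.add_eq_zero, if_neg (by omega : ¬(n + 4 = 0))]
    push_cast
    rw [if_neg (by simp)]
  exact (summable_nat_add_iff 4).mp (heq ▸ h)


lemma S_upper {σ : ℝ} (hσ : 1 < σ) :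
    ∑' n, sre σ n ≤ Real.log 2 * (2:ℝ) ^ (-σ) + Real.log 3 * (3:ℝ) ^ (-σ)
      + (3:ℝ) ^ (1-σ) * (Real.log 3/(σ-1) + 1/(σ-1)^2) := by
  have hsum := summable_sre hσ
  have hpeel := Summable.sum_add_tsum_nat_add (f := sre σ) 4 hsum
  have hfin : ∑ i ∈ Finset.range 4, sre σ i
      = Real.log 2 * (2:ℝ) ^ (-σ) + Real.log 3 * (3:ℝ) ^ (-σ) := by
    rw [Finset.sum_range_succ, Finset.sum_range_succ, Finset.sum_range_succ, Finset.sum_range_one]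
    simp only [sre]
    norm_num
  have heq : (fun n : ℕ => sre σ (n+4)) = fun n : ℕ => Real.log ((n:ℝ)+4) * ((n:ℝ)+4) ^ (-σ) := by
    funext n
    simp only [sre, Nat.add_eq_zero, if_neg (by omega : ¬(n + 4 = 0))]
    push_cast
    rw [if_neg (by simp)]
  have htail := (Stail_upper hσ).2
  calc ∑' n, sre σ n = ∑ i ∈ Finset.range 4, sre σ i + ∑' n : ℕ, sre σ (n+4) := hpeel.symm
    _ = (Real.log 2 * (2:ℝ) ^ (-σ) + Real.log 3 * (3:ℝ) ^ (-σ))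
        + ∑' n : ℕ, Real.log ((n:ℝ)+4) * ((n:ℝ)+4) ^ (-σ) := by rw [hfin, heq]
    _ ≤ _ := by linarith


end SMOaux

/-- The function `σ ↦ (σ - 1) ζ(σ)` is strictly increasing on `(1, 2]`. -/
theorem strictMonoOn_sub_one_mul_zeta :
    StrictMonoOn (fun σ : ℝ => (σ - 1) * (riemannZeta σ).re) (Set.Ioc 1 2) := by
  apply strictMonoOn_of_deriv_pos (convex_Ioc 1 2)
  · intro x hx
    have hne : (x:ℂ) ≠ 1 := by
      simp only [ne_eq, Complex.ofReal_eq_one]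
      exact ne_of_gt hx.1
    have hc : ContinuousAt (fun y : ℝ => (riemannZeta y).re) x :=
      Complex.continuous_re.continuousAt.comp
        ((differentiableAt_riemannZeta hne).continuousAt.comp
          Complex.continuous_ofReal.continuousAt)
    exact ((continuousAt_id.sub continuousAt_const).mul hc).continuousWithinAt
  · intro x hx
    rw [interior_Ioc] at hx
    obtain ⟨h1, h2⟩ := hx
    have hsum := SMOaux.summable_sre h1
    have hd : HasDerivAt (fun σ : ℝ => (σ - 1) * (riemannZeta σ).re)
        (1 * (riemannZeta x).re + (x - 1) * (-∑' n, SMOaux.sre x n)) x :=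
      ((hasDerivAt_id x).sub_const 1).mul (SMOaux.hasDerivAt_zeta_re h1 hsum)
    rw [hd.deriv]
    have hZ := SMOaux.Z_lower h1
    have hS := SMOaux.S_upper h1
    have hkey := SMOaux.key_numeric h1 h2
    have t0 : 0 < x - 1 := by linarith
    have hmul : (x-1) * (∑' n, SMOaux.sre x n)
        ≤ (x-1) * (Real.log 2 * (2:ℝ) ^ (-x) + Real.log 3 * (3:ℝ) ^ (-x)
          + (3:ℝ) ^ (1-x) * (Real.log 3/(x-1) + 1/(x-1)^2)) :=
      mul_le_mul_of_nonneg_left hS t0.le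
    have hexp : (x-1) * (Real.log 2 * (2:ℝ) ^ (-x) + Real.log 3 * (3:ℝ) ^ (-x)
          + (3:ℝ) ^ (1-x) * (Real.log 3/(x-1) + 1/(x-1)^2))
        = (x-1) * (Real.log 2 * (2:ℝ) ^ (-x) + Real.log 3 * (3:ℝ) ^ (-x))
          + (3:ℝ) ^ (1-x) * Real.log 3 + (3:ℝ) ^ (1-x)/(x-1) := by
      field_simp
      ring
    rw [hexp] at hmul
    have hgoal : 0 < (riemannZeta x).re - (x-1) * ∑' n, SMOaux.sre x n := by linarith
    have hre : 1 * (riemannZeta x).re + (x - 1) * (-∑' n, SMOaux.sre x n)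
        = (riemannZeta x).re - (x-1) * ∑' n, SMOaux.sre x n := by ring
    rw [hre]
    exact hgoal
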